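/- If T is a subset of ℤ/nℤ that admits a formally dual set S (i.e., for all y ∈ ℤ/nℤ, (|S|²/|T|)·ν_T(y) = Σ_{v ∈ ℤ/nℤ} ν_S(v)·ζ_n^{vy} where ζ_n = exp(2πi/n)), then the weight enumerator of T satisfies ν_T(y) = ν_T(gcd(y,n)) for all y ∈ ℤ/nℤ. -/

import Mathlib

open Finset Complex Polynomial

/-- Weight enumerator: number of ordered pairs in `S × S` with difference `y`. -/
def nuW {n : ℕ} [NeZero n] (S : Finset (ZMod n)) (y : ZMod n) : ℕ :=
  ((S ×ˢ S).filter (fun p => p.1 - p.2 = y)).card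

/-- `n`-th root of unity `ζ_n = exp(2πi/n)`. -/
noncomputable def zetaC (n : ℕ) : ℂ := Complex.exp (2 * Real.pi * Complex.I / n)

/-- Formal duality of `S, T ⊆ ℤ/nℤ` (both directions). -/
def IsFormallyDual {n : ℕ} [NeZero n] (S T : Finset (ZMod n)) : Prop :=
  S.Nonempty ∧ T.Nonempty ∧
  (∀ y : ZMod n, ((S.card : ℂ) ^ 2 / (T.card : ℂ)) * (nuW T y : ℂ) =
    ∑ v : ZMod n, (nuW S v : ℂ) * zetaC n ^ (v.val * y.val)) ∧
  (∀ y : ZMod n, ((T.card : ℂ) ^ 2 / (S.card : ℂ)) * (nuW S y : ℂ) =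
    ∑ v : ZMod n, (nuW T v : ℂ) * zetaC n ^ (v.val * y.val))

theorem stmt0 (n : ℕ) [NeZero n] (S T : Finset (ZMod n))
    (hS : S.Nonempty) (hT : T.Nonempty)
    (hdual : ∀ y : ZMod n, ((S.card : ℂ) ^ 2 / (T.card : ℂ)) * (nuW T y : ℂ) =
      ∑ v : ZMod n, (nuW S v : ℂ) * zetaC n ^ (v.val * y.val)) :
    ∀ y : ZMod n, nuW T y = nuW T ((Nat.gcd y.val n : ZMod n)) := by
  have hζ : IsPrimitiveRoot (zetaC n) n := by
    simpa [zetaC] using Complex.isPrimitiveRoot_exp n (NeZero.ne n)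
  have hn : 0 < n := Nat.pos_of_ne_zero (NeZero.ne n)
  set ζ := zetaC n with hzdef
  -- powers of ζ depend only on exponent mod n
  have hmod : ∀ a : ℕ, ζ ^ a = ζ ^ (a % n) := by
    intro a
    conv_lhs => rw [← Nat.div_add_mod a n]
    rw [pow_add, pow_mul, hζ.pow_eq_one, one_pow, one_mul]
  intro y
  set d := Nat.gcd y.val n with hd
  have hdpos : 0 < d := Nat.gcd_pos_of_pos_right _ hn
  have hddvd : d ∣ n := Nat.gcd_dvd_right _ _
  set m := n / d with hm
  have hmpos : 0 < m := Nat.div_pos (Nat.le_of_dvd hn hddvd) hdpos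
  have hnm : n = d * m := (Nat.mul_div_cancel' hddvd).symm
  -- ω₂ = ζ^d is a primitive m-th root
  have hω₂ : IsPrimitiveRoot (ζ ^ d) m := hζ.pow hn hnm
  -- ω₁ = ζ^{y.val} is a primitive m-th root
  have hyd : y.val = d * (y.val / d) := (Nat.mul_div_cancel' (Nat.gcd_dvd_left _ _)).symm
  have hcop : Nat.Coprime (y.val / d) m := Nat.coprime_div_gcd_div_gcd hdpos
  have hω₁ : IsPrimitiveRoot (ζ ^ y.val) m := by
    rw [hyd, pow_mul]
    exact hω₂.pow_of_coprime _ hcop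
  -- the polynomial P
  set P : ℚ[X] := ∑ v : ZMod n, Polynomial.C ((nuW S v : ℚ)) * X ^ v.val with hP
  have hTc : (T.card : ℂ) ≠ 0 := Nat.cast_ne_zero.mpr (Finset.card_ne_zero.mpr hT)
  have hSc : (S.card : ℂ) ≠ 0 := Nat.cast_ne_zero.mpr (Finset.card_ne_zero.mpr hS)
  obtain ⟨q, hqC⟩ : ∃ q : ℚ, (q : ℂ) = ((S.card : ℂ) ^ 2 / (T.card : ℂ)) * (nuW T y : ℂ) :=
    ⟨(S.card : ℚ) ^ 2 / (T.card : ℚ) * (nuW T y : ℚ), by push_cast; ring⟩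
  have haev : ∀ ω : ℂ, (Polynomial.aeval ω) P = ∑ v : ZMod n, (nuW S v : ℂ) * ω ^ v.val := by
    intro ω
    simp [hP, map_sum]
  -- aeval ω₁ P = q
  have h1 : (Polynomial.aeval (ζ ^ y.val)) P = (q : ℂ) := by
    rw [haev, hqC, hdual y]
    refine Finset.sum_congr rfl fun v _ => ?_
    rw [← pow_mul, mul_comm y.val v.val]
  -- minpoly divides P - C q
  have hdvd : minpoly ℚ (ζ ^ y.val) ∣ P - Polynomial.C q := by
    apply minpoly.dvd
    simp [h1]
  rw [← cyclotomic_eq_minpoly_rat hω₁ hmpos] at hdvd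
  obtain ⟨R, hR⟩ := hdvd
  -- evaluate at ω₂
  have hcyc : (Polynomial.aeval (ζ ^ d)) (cyclotomic m ℚ) = 0 := by
    have := hω₂.isRoot_cyclotomic hmpos
    rw [Polynomial.IsRoot] at this
    rw [Polynomial.aeval_def, ← Polynomial.eval_map, Polynomial.map_cyclotomic]
    exact this
  have h2 : (Polynomial.aeval (ζ ^ d)) P = (q : ℂ) := by
    have h0 := congrArg (Polynomial.aeval (ζ ^ d)) hR
    rw [map_sub, map_mul, hcyc, zero_mul, Polynomial.aeval_C] at h0
    have := sub_eq_zero.mp h0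
    simpa using this
  -- relate to hdual at (d : ZMod n)
  have hvald : ((d : ZMod n)).val = d % n := ZMod.val_natCast n d
  have h3 : ((S.card : ℂ) ^ 2 / (T.card : ℂ)) * (nuW T (d : ZMod n) : ℂ) = (q : ℂ) := by
    rw [hdual, ← h2, haev]
    refine Finset.sum_congr rfl fun v _ => ?_
    congr 1
    rw [hvald, ← pow_mul, mul_comm d v.val, hmod (v.val * (d % n)), hmod (v.val * d)]
    congr 1
    exact Nat.ModEq.mul_left v.val (Nat.mod_modEq d n)
  rw [hqC] at h3
  have hc : ((S.card : ℂ) ^ 2 / (T.card : ℂ)) ≠ 0 := div_ne_zero (pow_ne_zero 2 hSc) hTc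
  have := mul_left_cancel₀ hc h3
  exact_mod_cast this.symm
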